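/- Let r be a positive integer and let T_{2,2r} = ⟨a, b ∣ (ab)ʳ = (ba)ʳ⟩. The quotient of T_{2,2r} by the normal closure of the image of (ab)ʳ is isomorphic to the free product ℤ ∗ (ℤ/rℤ). -/

import Mathlib

/-- Relator of the toric link group `T_{2,2r} = ⟨a, b ∣ (ab)ʳ = (ba)ʳ⟩`,
with `a = 0`, `b = 1`. -/
def toric2Rels (r : ℕ) : Set (FreeGroup (Fin 2)) :=
  {(FreeGroup.of 0 * FreeGroup.of 1) ^ r * ((FreeGroup.of 1 * FreeGroup.of 0) ^ r)⁻¹}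

open Multiplicative Monoid

private abbrev G2 (r : ℕ) : Type :=
  PresentedGroup ({(FreeGroup.of 0 * FreeGroup.of 1) ^ r} : Set (FreeGroup (Fin 2)))

private lemma c_pow (r : ℕ) :
    (PresentedGroup.of 0 * PresentedGroup.of 1 : G2 r) ^ r = 1 := by
  have h : (PresentedGroup.of 0 * PresentedGroup.of 1 : G2 r) ^ r =
      PresentedGroup.mk _ ((FreeGroup.of 0 * FreeGroup.of 1) ^ r) := by
    rw [map_pow, map_mul]; rfl
  rw [h]
  exact (QuotientGroup.eq_one_iff _).2 (Subgroup.subset_normalClosure rfl)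

private lemma zmod_mult_hom_ext {r : ℕ} {P : Type*} [Group P]
    {φ ψ : Multiplicative (ZMod r) →* P} (h : φ (ofAdd 1) = ψ (ofAdd 1)) : φ = ψ := by
  refine MonoidHom.ext fun x => ?_
  obtain ⟨n, hn⟩ := ZMod.intCast_surjective (Multiplicative.toAdd x)
  have hx : (x : Multiplicative (ZMod r)) = (ofAdd ((1 : ZMod r))) ^ n := by
    rw [← ofAdd_zsmul]
    simp [hn]
  rw [hx, map_zpow, map_zpow, h]

section main
variable (r : ℕ)

private def fwdFun : Fin 2 → Coprod (Multiplicative ℤ) (Multiplicative (ZMod r))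
  | 0 => Coprod.inl (ofAdd (1 : ℤ))
  | 1 => (Coprod.inl (ofAdd (1 : ℤ)))⁻¹ * Coprod.inr (ofAdd (1 : ZMod r))

private lemma fwd_rel : ∀ w ∈ ({(FreeGroup.of 0 * FreeGroup.of 1) ^ r} :
    Set (FreeGroup (Fin 2))), FreeGroup.lift (fwdFun r) w = 1 := by
  rintro w rfl
  rw [map_pow, map_mul, FreeGroup.lift_apply_of, FreeGroup.lift_apply_of]
  show (Coprod.inl (ofAdd (1 : ℤ)) *
      ((Coprod.inl (ofAdd (1 : ℤ)))⁻¹ * Coprod.inr (ofAdd (1 : ZMod r)))) ^ r = 1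
  rw [← mul_assoc, mul_inv_cancel, one_mul, ← map_pow, ← ofAdd_nsmul]
  simp

private def Fwd : G2 r →* Coprod (Multiplicative ℤ) (Multiplicative (ZMod r)) :=
  PresentedGroup.toGroup (fwd_rel r)

private def zrHom : Multiplicative (ZMod r) →* G2 r :=
  AddMonoidHom.toMultiplicativeLeft
    (ZMod.lift r ⟨zmultiplesHom (Additive (G2 r))
        (Additive.ofMul (PresentedGroup.of 0 * PresentedGroup.of 1)), by
      simp only [zmultiplesHom_apply, ← ofMul_zpow, zpow_natCast, c_pow r, ofMul_one]⟩)

private lemma zrHom_apply (n : ℤ) :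
    zrHom r (ofAdd ((n : ZMod r))) = (PresentedGroup.of 0 * PresentedGroup.of 1 : G2 r) ^ n := by
  simp only [zrHom, AddMonoidHom.coe_toMultiplicativeLeft, Function.comp_apply, toAdd_ofAdd,
    ZMod.lift_coe, zmultiplesHom_apply, toMul_zsmul, toMul_ofMul]

private def Bwd : Coprod (Multiplicative ℤ) (Multiplicative (ZMod r)) →* G2 r :=
  Coprod.lift (zpowersHom (G2 r) (PresentedGroup.of 0)) (zrHom r)

private lemma bwd_fwd : (Bwd r).comp (Fwd r) = MonoidHom.id (G2 r) := by
  apply PresentedGroup.ext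
  intro x
  fin_cases x <;>
    simp only [MonoidHom.comp_apply, MonoidHom.id_apply, Fwd, PresentedGroup.toGroup.of]
  · show Bwd r (Coprod.inl (ofAdd (1 : ℤ))) = _
    simp [Bwd]
  · show Bwd r ((Coprod.inl (ofAdd (1 : ℤ)))⁻¹ * Coprod.inr (ofAdd (1 : ZMod r))) = _
    rw [map_mul, map_inv]
    have h1 : (1 : ZMod r) = ((1 : ℤ) : ZMod r) := by norm_cast
    simp only [Bwd, Coprod.lift_apply_inl, Coprod.lift_apply_inr, zpowersHom_apply]
    rw [h1, zrHom_apply r 1]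
    simp only [toAdd_ofAdd, zpow_one, inv_mul_cancel_left]
    rfl

private lemma fwd_bwd : (Fwd r).comp (Bwd r) =
    MonoidHom.id (Coprod (Multiplicative ℤ) (Multiplicative (ZMod r))) := by
  apply Coprod.hom_ext
  · apply MonoidHom.ext_mint
    simp only [MonoidHom.comp_apply, MonoidHom.id_apply]
    show Fwd r (Bwd r (Coprod.inl (ofAdd (1:ℤ)))) = _
    simp only [Bwd, Coprod.lift_apply_inl, zpowersHom_apply, zpow_one]
    show Fwd r (PresentedGroup.of 0) = _
    simp [Fwd, fwdFun]
  · apply zmod_mult_hom_ext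
    simp only [MonoidHom.comp_apply, MonoidHom.id_apply]
    show Fwd r (Bwd r (Coprod.inr (ofAdd (1 : ZMod r)))) = _
    have h1 : (1 : ZMod r) = ((1 : ℤ) : ZMod r) := by norm_cast
    rw [h1]
    simp only [Bwd, Coprod.lift_apply_inr]
    rw [zrHom_apply r 1, zpow_one, map_mul]
    have e0 : Fwd r (PresentedGroup.of 0) = Coprod.inl (ofAdd (1:ℤ)) :=
      PresentedGroup.toGroup.of _
    have e1 : Fwd r (PresentedGroup.of 1) =
        (Coprod.inl (ofAdd (1 : ℤ)))⁻¹ * Coprod.inr (ofAdd (1 : ZMod r)) :=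
      PresentedGroup.toGroup.of _
    rw [e0, e1, ← mul_assoc, mul_inv_cancel, one_mul]
    norm_cast

private def e2 : G2 r ≃* Coprod (Multiplicative ℤ) (Multiplicative (ZMod r)) :=
  MonoidHom.toMulEquiv (Fwd r) (Bwd r) (bwd_fwd r) (fwd_bwd r)

end main

/-- The quotient of `T_{2,2r}` by the normal closure of `(ab)ʳ` is isomorphic to the
free product `ℤ ∗ (ℤ/rℤ)`. -/
theorem stmt_14 (r : ℕ) (hr : 0 < r) :
    Nonempty
      ((PresentedGroup (toric2Rels r) ⧸
          Subgroup.normalClosure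
            {(PresentedGroup.of 0 * PresentedGroup.of 1 :
                PresentedGroup (toric2Rels r)) ^ r}) ≃*
        Monoid.Coprod (Multiplicative ℤ) (Multiplicative (ZMod r))) := by
  set N := Subgroup.normalClosure (toric2Rels r) with hN
  set M := Subgroup.normalClosure
    ({(FreeGroup.of 0 * FreeGroup.of 1) ^ r} : Set (FreeGroup (Fin 2))) with hM
  have hm1 : (FreeGroup.of 0 * FreeGroup.of 1 : FreeGroup (Fin 2)) ^ r ∈ M :=
    Subgroup.subset_normalClosure rfl
  have hm2 : (FreeGroup.of 1 * FreeGroup.of 0 : FreeGroup (Fin 2)) ^ r ∈ M := by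
    have key : (FreeGroup.of 1 * FreeGroup.of 0 : FreeGroup (Fin 2)) ^ r =
        ((FreeGroup.of 0)⁻¹ * (FreeGroup.of 0 * FreeGroup.of 1) * ((FreeGroup.of 0)⁻¹)⁻¹) ^ r := by
      congr 1
      group
    rw [key, conj_pow]
    exact Subgroup.Normal.conj_mem (Subgroup.normalClosure_normal) _ hm1 _
  have hNM : N ≤ M := by
    apply Subgroup.normalClosure_le_normal
    rintro x hx
    rcases hx with rfl
    exact mul_mem hm1 (inv_mem hm2)
  have hS : Subgroup.normalClosure
      {(QuotientGroup.mk' N (FreeGroup.of 0) * QuotientGroup.mk' N (FreeGroup.of 1) :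
        FreeGroup (Fin 2) ⧸ N) ^ r} =
      M.map (QuotientGroup.mk' N) := by
    rw [Subgroup.map_normalClosure _ _ (QuotientGroup.mk'_surjective N), Set.image_singleton,
      map_pow, map_mul]
  haveI : (M.map (QuotientGroup.mk' N)).Normal :=
    Subgroup.Normal.map inferInstance _ (QuotientGroup.mk'_surjective N)
  exact ⟨((QuotientGroup.quotientMulEquivOfEq hS).trans
    (QuotientGroup.quotientQuotientEquivQuotient N M hNM)).trans (e2 r)⟩
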